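/- Let f_1, …, f_P : ℝ^n → ℝ be continuously differentiable and suppose there is L > 0 such that each gradient ∇f_p is L-Lipschitz continuous; set f = ∑_{p=1}^P f_p. Let {w^k} ⊂ ℝ^n be a bounded sequence and {ζ^k} ⊂ (0, ∞) with ζ^k → 0. For each k let (h_1^k, …, h_P^k) be a permutation of {1, …, P}, define w̃_0^k = w^k and w̃_i^k = w̃_{i−1}^k − ζ^k ∇f_{h_i^k}(w̃_{i−1}^k) for i = 1, …, P, and set d^k = −∑_{i=1}^P ∇f_{h_i^k}(w̃_{i−1}^k). Then for every limit point w̄ of {w^k} there exists a strictly increasing map φ : ℕ → ℕ such that: w^{φ(k)} → w̄, ζ^{φ(k)} → 0, w̃_i^{φ(k)} → w̄ for every i = 1, …, P, and d^{φ(k)} → −∇f(w̄). -/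

import Mathlib

open Filter Finset

lemma gradient_sum_aux {n P : ℕ} (f : Fin P → EuclideanSpace ℝ (Fin n) → ℝ)
    (hf : ∀ p, ContDiff ℝ 1 (f p)) (x : EuclideanSpace ℝ (Fin n)) :
    gradient (fun y => ∑ p : Fin P, f p y) x = ∑ p : Fin P, gradient (f p) x := by
  unfold gradient
  rw [fderiv_fun_sum (fun p _ => ((hf p).differentiable one_ne_zero).differentiableAt), map_sum]

/-- Proposition `limtildew_general`.
If `{w^k}` is bounded and `ζ^k → 0`, then for every limit point `w̄` of `{w^k}`
there is a subsequence along which `w^k → w̄`, `ζ^k → 0`, all the inner iterates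
`w̃_i^k → w̄` (`i = 1, …, P`), and the directions `d^k → -∇f(w̄)`, where
`f = ∑_{p=1}^P f_p`. -/
theorem stmt_2 {n P : ℕ}
    (f : Fin P → EuclideanSpace ℝ (Fin n) → ℝ)
    (hf : ∀ p, ContDiff ℝ 1 (f p))
    (L : ℝ) (hL : 0 < L)
    (hlip : ∀ p (u v : EuclideanSpace ℝ (Fin n)),
      ‖gradient (f p) u - gradient (f p) v‖ ≤ L * ‖u - v‖)
    (w : ℕ → EuclideanSpace ℝ (Fin n)) (hwbdd : ∃ C, ∀ k, ‖w k‖ ≤ C)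
    (ζ : ℕ → ℝ) (hζpos : ∀ k, 0 < ζ k)
    (hζto0 : Tendsto ζ atTop (nhds 0))
    (h : ℕ → ℕ → Fin P)
    (hperm : ∀ k, Function.Bijective (fun i : Fin P => h k i.val))
    (wt : ℕ → ℕ → EuclideanSpace ℝ (Fin n))
    (hinit : ∀ k, wt k 0 = w k)
    (hiter : ∀ k, ∀ i, i < P →
      wt k (i + 1) = wt k i - ζ k • gradient (f (h k i)) (wt k i))
    (d : ℕ → EuclideanSpace ℝ (Fin n))
    (hd : ∀ k, d k = -∑ i ∈ Finset.range P, gradient (f (h k i)) (wt k i))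
    (wbar : EuclideanSpace ℝ (Fin n))
    (hwbar : ∃ ψ : ℕ → ℕ, StrictMono ψ ∧
      Tendsto (fun k => w (ψ k)) atTop (nhds wbar)) :
    ∃ φ : ℕ → ℕ, StrictMono φ ∧
      Tendsto (fun k => w (φ k)) atTop (nhds wbar) ∧
      Tendsto (fun k => ζ (φ k)) atTop (nhds 0) ∧
      (∀ i, 1 ≤ i → i ≤ P →
        Tendsto (fun k => wt (φ k) i) atTop (nhds wbar)) ∧
      Tendsto (fun k => d (φ k)) atTop
        (nhds (-gradient (fun x => ∑ p : Fin P, f p x) wbar)) := by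
  obtain ⟨ψ, hψmono, hψw⟩ := hwbar
  have hζψ : Tendsto (fun k => ζ (ψ k)) atTop (nhds 0) :=
    hζto0.comp hψmono.tendsto_atTop
  -- uniform bound on gradients at wbar
  set M : ℝ := ∑ p : Fin P, ‖gradient (f p) wbar‖ with hM
  have hMq : ∀ q : Fin P, ‖gradient (f q) wbar‖ ≤ M := fun q =>
    Finset.single_le_sum (f := fun p => ‖gradient (f p) wbar‖)
      (fun p _ => norm_nonneg _) (Finset.mem_univ q)
  -- convergence of inner iterates
  have key : ∀ i, i ≤ P → Tendsto (fun k => wt (ψ k) i) atTop (nhds wbar) := by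
    intro i
    induction i with
    | zero =>
      intro _
      simpa only [hinit] using hψw
    | succ i ih =>
      intro hiP
      have hiP' : i < P := Nat.lt_of_succ_le hiP
      have IH := ih (le_of_lt hiP')
      have hnorm0 : Tendsto (fun k => ‖wt (ψ k) i - wbar‖) atTop (nhds 0) :=
        tendsto_iff_norm_sub_tendsto_zero.mp IH
      -- the step term tends to 0
      have hstep : Tendsto
          (fun k => ζ (ψ k) • gradient (f (h (ψ k) i)) (wt (ψ k) i))
          atTop (nhds (0 : EuclideanSpace ℝ (Fin n))) := by
        rw [tendsto_zero_iff_norm_tendsto_zero]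
        have hb : ∀ k, ‖ζ (ψ k) • gradient (f (h (ψ k) i)) (wt (ψ k) i)‖ ≤
            ζ (ψ k) * (L * ‖wt (ψ k) i - wbar‖ + M) := by
          intro k
          rw [norm_smul, Real.norm_eq_abs, abs_of_pos (hζpos (ψ k))]
          apply mul_le_mul_of_nonneg_left _ (le_of_lt (hζpos (ψ k)))
          calc ‖gradient (f (h (ψ k) i)) (wt (ψ k) i)‖
              ≤ ‖gradient (f (h (ψ k) i)) (wt (ψ k) i)
                  - gradient (f (h (ψ k) i)) wbar‖
                + ‖gradient (f (h (ψ k) i)) wbar‖ := by simpa using norm_add_le (gradient (f (h (ψ k) i)) (wt (ψ k) i) - gradient (f (h (ψ k) i)) wbar) (gradient (f (h (ψ k) i)) wbar)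
            _ ≤ L * ‖wt (ψ k) i - wbar‖ + M :=
                add_le_add (hlip _ _ _) (hMq _)
        have hbtend : Tendsto (fun k => ζ (ψ k) * (L * ‖wt (ψ k) i - wbar‖ + M))
            atTop (nhds 0) := by
          have := hζψ.mul (((hnorm0.const_mul L).add_const M))
          simpa using this
        exact squeeze_zero (fun k => norm_nonneg _) hb hbtend
      have := IH.sub hstep
      rw [sub_zero] at this
      apply this.congr
      intro k
      rw [hiter (ψ k) i hiP']
  refine ⟨ψ, hψmono, hψw, hζψ, fun i _ hi2 => key i hi2, ?_⟩
  -- the direction converges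
  have hGsum : gradient (fun x => ∑ p : Fin P, f p x) wbar
      = ∑ p : Fin P, gradient (f p) wbar := gradient_sum_aux f hf wbar
  rw [tendsto_iff_norm_sub_tendsto_zero]
  have hrepr : ∀ k, d (ψ k) - (-gradient (fun x => ∑ p : Fin P, f p x) wbar)
      = ∑ i ∈ Finset.range P,
          (gradient (f (h (ψ k) i)) wbar - gradient (f (h (ψ k) i)) (wt (ψ k) i)) := by
    intro k
    have hpermsum : ∑ i ∈ Finset.range P, gradient (f (h (ψ k) i)) wbar
        = ∑ p : Fin P, gradient (f p) wbar := by
      rw [← Fin.sum_univ_eq_sum_range (fun i => gradient (f (h (ψ k) i)) wbar)]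
      exact Fintype.sum_bijective _ (hperm (ψ k))
        (fun i : Fin P => gradient (f (h (ψ k) i.val)) wbar)
        (fun p => gradient (f p) wbar) (fun i => rfl)
    rw [hd, hGsum, sub_neg_eq_add, ← hpermsum, Finset.sum_sub_distrib]
    abel
  have hbd : ∀ k, ‖d (ψ k) - (-gradient (fun x => ∑ p : Fin P, f p x) wbar)‖
      ≤ ∑ i ∈ Finset.range P, L * ‖wt (ψ k) i - wbar‖ := by
    intro k
    rw [hrepr k]
    refine le_trans (norm_sum_le _ _) (Finset.sum_le_sum fun i _ => ?_)
    calc ‖gradient (f (h (ψ k) i)) wbar - gradient (f (h (ψ k) i)) (wt (ψ k) i)‖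
        ≤ L * ‖wbar - wt (ψ k) i‖ := hlip _ _ _
      _ = L * ‖wt (ψ k) i - wbar‖ := by rw [norm_sub_rev]
  have hbtend : Tendsto (fun k => ∑ i ∈ Finset.range P, L * ‖wt (ψ k) i - wbar‖)
      atTop (nhds 0) := by
    have : Tendsto (fun k => ∑ i ∈ Finset.range P, L * ‖wt (ψ k) i - wbar‖)
        atTop (nhds (∑ i ∈ Finset.range P, (0 : ℝ))) := by
      refine tendsto_finset_sum _ fun i hi => ?_
      have hiP : i < P := Finset.mem_range.mp hi
      have := tendsto_iff_norm_sub_tendsto_zero.mp (key i (le_of_lt hiP))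
      simpa using this.const_mul L
    simpa using this
  exact squeeze_zero (fun k => norm_nonneg _) hbd hbtend
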